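/- Let Hⁿ = {x = (x₁,…,xₙ) ∈ ℝⁿ : xₙ > 0} be the upper half-space. Then for all x, y ∈ Hⁿ, s_{Hⁿ}(x,y) = |x−y|/|x−ȳ| = |x−y|/√(|x−y|² + 4·xₙ·yₙ), where ȳ denotes the reflection of y in the hyperplane {xₙ = 0}. In particular s_{Hⁿ}(x,y) = p_{Hⁿ}(x,y), since d_{Hⁿ}(x) = xₙ and d_{Hⁿ}(y) = yₙ. -/

import Mathlib

open Metric Set

/-- The triangular ratio metric `s_G(x,y) = sup_{z ∈ ∂G} |x-y|/(|x-z|+|z-y|)`. -/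
noncomputable def triangularRatio {n : ℕ} (G : Set (EuclideanSpace ℝ (Fin n)))
    (x y : EuclideanSpace ℝ (Fin n)) : ℝ :=
  ⨆ z : frontier G, dist x y / (dist x z.1 + dist z.1 y)

/-- Distance to the boundary `d_G(x) = dist(x, ∂G)`. -/
noncomputable def distBd {n : ℕ} (G : Set (EuclideanSpace ℝ (Fin n)))
    (x : EuclideanSpace ℝ (Fin n)) : ℝ :=
  Metric.infDist x (frontier G)

/-- The distance ratio metric `j_G(x,y) = log(1 + |x-y|/min{d_G(x), d_G(y)})`. -/
noncomputable def distRatio {n : ℕ} (G : Set (EuclideanSpace ℝ (Fin n)))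
    (x y : EuclideanSpace ℝ (Fin n)) : ℝ :=
  Real.log (1 + dist x y / min (distBd G x) (distBd G y))

/-- The quantity `p_G(x,y) = |x-y| / √(|x-y|² + 4 d_G(x) d_G(y))`. -/
noncomputable def pMetric {n : ℕ} (G : Set (EuclideanSpace ℝ (Fin n)))
    (x y : EuclideanSpace ℝ (Fin n)) : ℝ :=
  dist x y / Real.sqrt (dist x y ^ 2 + 4 * distBd G x * distBd G y)

lemma frontier_halfspaceAux {n : ℕ} (i : Fin n) :
    frontier {z : EuclideanSpace ℝ (Fin n) | 0 < z i} =
      {z : EuclideanSpace ℝ (Fin n) | z i = 0} := by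
  have hsurj : Function.Surjective (EuclideanSpace.proj (𝕜 := ℝ) i) := by
    intro c
    exact ⟨EuclideanSpace.single i c, by simp⟩
  have hopen : IsOpenMap (EuclideanSpace.proj (𝕜 := ℝ) i) :=
    ContinuousLinearMap.isOpenMap _ hsurj
  have h1 : {z : EuclideanSpace ℝ (Fin n) | 0 < z i} =
      (EuclideanSpace.proj (𝕜 := ℝ) i) ⁻¹' (Set.Ioi 0) := rfl
  rw [h1, ← hopen.preimage_frontier_eq_frontier_preimage (EuclideanSpace.proj i).continuous,
    frontier_Ioi]
  rfl

lemma abs_coord_sub_le {n : ℕ} (x z : EuclideanSpace ℝ (Fin n)) (i : Fin n) :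
    |x i - z i| ≤ dist x z := by
  rw [EuclideanSpace.dist_eq, ← Real.sqrt_sq_eq_abs]
  apply Real.sqrt_le_sqrt
  calc (x i - z i) ^ 2 = dist (x i) (z i) ^ 2 := by rw [Real.dist_eq, sq_abs]
    _ ≤ ∑ j, dist (x j) (z j) ^ 2 :=
      Finset.single_le_sum (f := fun j => dist (x j) (z j) ^ 2) (fun j _ => sq_nonneg _) (Finset.mem_univ i)

theorem sH_eq_dist_div_dist_reflection {n : ℕ}
    (x y : EuclideanSpace ℝ (Fin (n + 1)))
    (hx : 0 < x (Fin.last n)) (hy : 0 < y (Fin.last n)) :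
    triangularRatio {z : EuclideanSpace ℝ (Fin (n + 1)) | 0 < z (Fin.last n)} x y =
        dist x y / dist x
          (WithLp.toLp 2 (Function.update y (Fin.last n) (-(y (Fin.last n)))) : EuclideanSpace ℝ (Fin (n + 1))) ∧
      dist x (WithLp.toLp 2 (Function.update y (Fin.last n) (-(y (Fin.last n)))) : EuclideanSpace ℝ (Fin (n + 1))) =
        Real.sqrt (dist x y ^ 2 + 4 * x (Fin.last n) * y (Fin.last n)) ∧
      triangularRatio {z : EuclideanSpace ℝ (Fin (n + 1)) | 0 < z (Fin.last n)} x y =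
        pMetric {z : EuclideanSpace ℝ (Fin (n + 1)) | 0 < z (Fin.last n)} x y := by
  set i := Fin.last n with hi
  set G : Set (EuclideanSpace ℝ (Fin (n + 1))) := {z | 0 < z i} with hG
  set ybar : EuclideanSpace ℝ (Fin (n + 1)) := WithLp.toLp 2 (Function.update y i (-(y i))) with hybar
  have hfr : frontier G = {z : EuclideanSpace ℝ (Fin (n + 1)) | z i = 0} := frontier_halfspaceAux i
  have hxyi : 0 < x i + y i := by linarith
  -- (A) squared distance to the reflection
  have hA : dist x ybar ^ 2 = dist x y ^ 2 + 4 * x i * y i := by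
    rw [EuclideanSpace.dist_eq, EuclideanSpace.dist_eq,
      Real.sq_sqrt (Finset.sum_nonneg fun j _ => sq_nonneg _),
      Real.sq_sqrt (Finset.sum_nonneg fun j _ => sq_nonneg _),
      ← Finset.sum_erase_add _ _ (Finset.mem_univ i),
      ← Finset.sum_erase_add _ _ (Finset.mem_univ i)]
    have h1 : ∀ j ∈ Finset.univ.erase i,
        dist (x j) (ybar j) ^ 2 = dist (x j) (y j) ^ 2 := by
      intro j hj
      rw [hybar, WithLp.ofLp_toLp]; simp only [WithLp.ofLp_toLp]; rw [Function.update_of_ne (Finset.ne_of_mem_erase hj)]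
    rw [Finset.sum_congr rfl h1, hybar, WithLp.ofLp_toLp]; simp only [WithLp.ofLp_toLp]; rw [Function.update_self, Real.dist_eq, Real.dist_eq,
      sq_abs, sq_abs]
    ring
  -- (B) distance to the reflection
  have hB : dist x ybar = Real.sqrt (dist x y ^ 2 + 4 * x i * y i) := by
    rw [← hA, Real.sqrt_sq dist_nonneg]
  have hpos : 0 < dist x ybar := by
    rw [hB]
    apply Real.sqrt_pos.2
    have : 0 < 4 * x i * y i := by positivity
    nlinarith [sq_nonneg (dist x y)]
  -- (D) points on the hyperplane are equidistant from y and ybar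
  have hD : ∀ z : EuclideanSpace ℝ (Fin (n + 1)), z i = 0 → dist z y = dist z ybar := by
    intro z hz
    rw [EuclideanSpace.dist_eq, EuclideanSpace.dist_eq]
    congr 1
    apply Finset.sum_congr rfl
    intro j _
    by_cases hji : j = i
    · subst hji
      rw [hz, hybar, WithLp.ofLp_toLp]; simp only [WithLp.ofLp_toLp]; rw [Function.update_self, Real.dist_eq, Real.dist_eq, sq_abs, sq_abs]
      ring
    · rw [hybar, WithLp.ofLp_toLp]; simp only [WithLp.ofLp_toLp]; rw [Function.update_of_ne hji]
  -- the optimal boundary point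
  set t : ℝ := x i / (x i + y i) with ht
  have ht0 : 0 ≤ t := div_nonneg hx.le hxyi.le
  have ht1 : t ≤ 1 := by
    rw [ht, div_le_one hxyi]; linarith
  set zstar : EuclideanSpace ℝ (Fin (n + 1)) := x + t • (ybar - x) with hzstar
  have hzi : zstar i = 0 := by
    have : zstar i = x i + t * (ybar i - x i) := rfl
    rw [this, hybar, WithLp.ofLp_toLp]; simp only [WithLp.ofLp_toLp]; rw [Function.update_self, ht]
    field_simp; ring
  have e1 : x - zstar = t • (x - ybar) := by
    rw [hzstar]; module
  have e2 : zstar - ybar = (1 - t) • (x - ybar) := by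
    rw [hzstar]; module
  have hd1 : dist x zstar = t * dist x ybar := by
    rw [dist_eq_norm, e1, norm_smul, Real.norm_eq_abs, abs_of_nonneg ht0, dist_eq_norm]
  have hd2 : dist zstar ybar = (1 - t) * dist x ybar := by
    rw [dist_eq_norm, e2, norm_smul, Real.norm_eq_abs, abs_of_nonneg (by linarith), dist_eq_norm]
  have hsum : dist x zstar + dist zstar ybar = dist x ybar := by
    rw [hd1, hd2]; ring
  have hzmem : zstar ∈ frontier G := by rw [hfr]; exact hzi
  haveI : Nonempty ↥(frontier G) := ⟨⟨zstar, hzmem⟩⟩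
  -- upper bound
  have hub : ∀ z : ↥(frontier G),
      dist x y / (dist x z.1 + dist z.1 y) ≤ dist x y / dist x ybar := by
    rintro ⟨z, hz⟩
    rw [hfr] at hz
    simp only
    rw [hD z hz]
    exact div_le_div_of_nonneg_left dist_nonneg hpos (dist_triangle x z ybar)
  have hmain : triangularRatio G x y = dist x y / dist x ybar := by
    unfold triangularRatio
    apply le_antisymm
    · exact ciSup_le hub
    · have hval : dist x y / (dist x (⟨zstar, hzmem⟩ : ↥(frontier G)).1 +
          dist (⟨zstar, hzmem⟩ : ↥(frontier G)).1 y) = dist x y / dist x ybar := by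
        simp only
        rw [hD zstar hzi, hsum]
      rw [← hval]
      exact le_ciSup ⟨dist x y / dist x ybar, by rintro _ ⟨z, rfl⟩; exact hub z⟩ _
  -- distance to the boundary
  have hdB : ∀ w : EuclideanSpace ℝ (Fin (n + 1)), 0 < w i → distBd G w = w i := by
    intro w hw
    unfold distBd
    rw [hfr]
    have hwm : (WithLp.toLp 2 (Function.update w i 0) : EuclideanSpace ℝ (Fin (n + 1))) ∈
        {z : EuclideanSpace ℝ (Fin (n + 1)) | z i = 0} := Function.update_self _ _ _
    apply le_antisymm
    · have hdw : dist w (WithLp.toLp 2 (Function.update w i 0) : EuclideanSpace ℝ (Fin (n + 1))) = w i := by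
        rw [EuclideanSpace.dist_eq]
        have : (∑ j, dist (w j) ((WithLp.toLp 2 (Function.update w i 0) : EuclideanSpace ℝ (Fin (n + 1))) j) ^ 2)
            = (w i) ^ 2 := by
          rw [Finset.sum_eq_single i]
          · rw [WithLp.ofLp_toLp]; simp only [WithLp.ofLp_toLp]; rw [Function.update_self, Real.dist_eq, sub_zero, sq_abs]
          · intro j _ hji
            rw [WithLp.ofLp_toLp]; simp only [WithLp.ofLp_toLp]; rw [Function.update_of_ne hji, dist_self]
            ring
          · intro h; exact absurd (Finset.mem_univ i) h
        rw [this, Real.sqrt_sq hw.le]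
      calc infDist w {z : EuclideanSpace ℝ (Fin (n + 1)) | z i = 0}
          ≤ dist w (WithLp.toLp 2 (Function.update w i 0) : EuclideanSpace ℝ (Fin (n + 1))) :=
            infDist_le_dist_of_mem hwm
        _ = w i := hdw
    · haveI : Nonempty ↥{z : EuclideanSpace ℝ (Fin (n + 1)) | z i = 0} :=
        ⟨⟨_, hwm⟩⟩
      rw [infDist_eq_iInf]
      apply le_ciInf
      rintro ⟨z, hz⟩
      calc w i = |w i - z i| := by rw [hz, sub_zero, abs_of_nonneg hw.le]
        _ ≤ dist w z := abs_coord_sub_le w z i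
  refine ⟨hmain, hB, ?_⟩
  rw [hmain, hB]
  unfold pMetric
  rw [hdB x hx, hdB y hy]
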